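/- Let T_x^+, T_x^-, T_y^+, T_y^- be the four linear orders obtained by sorting an n-point planar set (distinct coordinates) in increasing/decreasing x and y. Define k_{++} as the largest k ≤ n such that |Sub_j(T_x^+) \ Sub_j(T_y^+)| ≤ n/3 for all j ≤ k, and analogously k_{+-}, k_{-+}, k_{--}. Then at least one of k_{++}, k_{+-}, k_{-+}, k_{--} equals n. -/
import Mathlib


/-- The set of the first `k` elements of the linear order on `Fin n`
represented by the listing `T : Fin n ≃ Fin n`. -/
def prefixSet {n : ℕ} (k : ℕ) (T : Fin n ≃ Fin n) : Finset (Fin n) :=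
  (Finset.univ.filter fun i : Fin n => (i : ℕ) < k).image T

/-- The largest `k ≤ n` such that `|prefixSet j T \ prefixSet j U| ≤ n / 3`
for every `j ≤ k`. -/
def kval {n : ℕ} (T U : Fin n ≃ Fin n) : ℕ :=
  Nat.findGreatest (fun k => ∀ j ≤ k, (prefixSet j T \ prefixSet j U).card ≤ n / 3) n

lemma mem_prefixSet {n k : ℕ} {T : Fin n ≃ Fin n} {i : Fin n} :
    i ∈ prefixSet k T ↔ ((T.symm i : Fin n) : ℕ) < k := by
  simp only [prefixSet, Finset.mem_image, Finset.mem_filter, Finset.mem_univ, true_and]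
  constructor
  · rintro ⟨a, ha, rfl⟩; simpa using ha
  · intro h; exact ⟨T.symm i, h, T.apply_symm_apply i⟩

lemma prefixSet_mono {n k k' : ℕ} (h : k ≤ k') (T : Fin n ≃ Fin n) :
    prefixSet k T ⊆ prefixSet k' T := fun i hi =>
  mem_prefixSet.2 (lt_of_lt_of_le (mem_prefixSet.1 hi) h)

lemma card_prefixSet {n t : ℕ} (ht : t ≤ n) (T : Fin n ≃ Fin n) :
    (prefixSet t T).card = t := by
  rw [prefixSet, Finset.card_image_of_injective _ T.injective]
  have : (Finset.univ.filter fun i : Fin n => (i : ℕ) < t)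
      = Finset.attachFin (Finset.range t)
        (fun m hm => lt_of_lt_of_le (Finset.mem_range.1 hm) ht) := by
    ext i
    simp [Finset.mem_attachFin]
  rw [this, Finset.card_attachFin, Finset.card_range]

/-- Uniqueness: a listing in strictly decreasing `f`-order is the reverse of a
listing in strictly increasing `f`-order. -/
lemma eq_revPerm_trans {n : ℕ} {f : Fin n → ℝ}
    (T U : Fin n ≃ Fin n) (hT : StrictMono (f ∘ T)) (hU : StrictAnti (f ∘ U)) :
    U = Fin.revPerm.trans T := by
  have hfinj : Function.Injective f := by
    have hfe : f = (f ∘ T) ∘ T.symm := by ext i; simp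
    rw [hfe]
    exact hT.injective.comp T.symm.injective
  have hW : StrictAnti (f ∘ (Fin.revPerm.trans T)) := by
    intro i j hij
    exact hT (by simpa using Fin.rev_lt_rev.2 hij)
  have hr : Set.range (f ∘ U) = Set.range (f ∘ (Fin.revPerm.trans T)) := by
    rw [Set.range_comp, Set.range_comp, Equiv.range_eq_univ, Equiv.range_eq_univ]
  have hfe : (f ∘ U) = (f ∘ (Fin.revPerm.trans T)) := (hU.range_inj hW).1 hr
  exact Equiv.ext fun i => hfinj (congrFun hfe i)

lemma prefixSet_revPerm_trans {n j : ℕ} (hj : j ≤ n) (T : Fin n ≃ Fin n) :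
    prefixSet j (Fin.revPerm.trans T) = (prefixSet (n - j) T)ᶜ := by
  ext i
  simp only [mem_prefixSet, Finset.mem_compl, Equiv.symm_trans_apply]
  have h1 : ((Fin.revPerm.symm (T.symm i) : Fin n) : ℕ) = n - ((T.symm i : ℕ) + 1) := by
    simp [Fin.val_rev]
  rw [h1]
  have h2 : (T.symm i : ℕ) < n := (T.symm i).isLt
  omega

lemma three_disjoint_contra {n : ℕ} (hn3 : 3 ∣ n) (X Y Z : Finset (Fin n))
    (hXY : Disjoint X Y) (hXZ : Disjoint X Z) (hYZ : Disjoint Y Z)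
    (hX : n / 3 < X.card) (hY : n / 3 < Y.card) (hZ : n / 3 < Z.card) : False := by
  have h : (X ∪ Y ∪ Z).card ≤ n := by
    simpa using Finset.card_le_univ (X ∪ Y ∪ Z)
  rw [Finset.card_union_of_disjoint (Finset.disjoint_union_left.2 ⟨hXZ, hYZ⟩),
    Finset.card_union_of_disjoint hXY] at h
  omega

theorem stmt_9 (n : ℕ) (hn3 : 3 ∣ n) (V : Fin n → ℝ × ℝ)
    (hx : ∀ i j : Fin n, i ≠ j → (V i).1 ≠ (V j).1)
    (hy : ∀ i j : Fin n, i ≠ j → (V i).2 ≠ (V j).2)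
    (Txp Txm Typ Tym : Fin n ≃ Fin n)
    (hTxp : ∀ i j : Fin n, i < j → (V (Txp i)).1 < (V (Txp j)).1)
    (hTxm : ∀ i j : Fin n, i < j → (V (Txm j)).1 < (V (Txm i)).1)
    (hTyp : ∀ i j : Fin n, i < j → (V (Typ i)).2 < (V (Typ j)).2)
    (hTym : ∀ i j : Fin n, i < j → (V (Tym j)).2 < (V (Tym i)).2) :
    kval Txp Typ = n ∨ kval Txp Tym = n ∨ kval Txm Typ = n ∨ kval Txm Tym = n := by
  by_contra hcon
  push_neg at hcon
  obtain ⟨h1, h2, -, -⟩ := hcon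
  -- Tym is the reverse listing of Typ
  have hTymEq : Tym = Fin.revPerm.trans Typ :=
    eq_revPerm_trans (f := fun i => (V i).2) Typ Tym
      (fun i j hij => hTyp i j hij) (fun i j hij => hTym i j hij)
  -- negations give bad indices
  have key : ∀ (T U : Fin n ≃ Fin n), kval T U ≠ n →
      ∃ j ≤ n, n / 3 < (prefixSet j T \ prefixSet j U).card := by
    intro T U hne
    by_contra he
    push_neg at he
    exact hne (le_antisymm (Nat.findGreatest_le n)
      (Nat.le_findGreatest le_rfl fun j hj => he j hj))
  obtain ⟨j, hjn, haj⟩ := key _ _ h1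
  obtain ⟨j', hj'n, hbj⟩ := key _ _ h2
  -- rewrite the second set as an intersection
  rw [hTymEq, prefixSet_revPerm_trans hj'n] at hbj
  have hbj' : n / 3 < (prefixSet j' Txp ∩ prefixSet (n - j') Typ).card := by
    rwa [sdiff_compl] at hbj
  set P : ℕ → Finset (Fin n) := fun t => prefixSet t Txp with hP
  set Q : ℕ → Finset (Fin n) := fun t => prefixSet t Typ with hQ
  set B := P j \ Q j with hB
  set C := Q j \ P j with hC
  set A' := P j' ∩ Q (n - j') with hA'
  set D' := (P j' ∪ Q (n - j'))ᶜ with hD'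
  -- cardinalities
  have hcardB : n / 3 < B.card := haj
  have hcardC : n / 3 < C.card := by
    have : C.card = B.card := by
      rw [hB, hC, Finset.card_sdiff_comm]
      rw [card_prefixSet hjn, card_prefixSet hjn]
    omega
  have hcardA' : n / 3 < A'.card := hbj'
  have hcardD' : n / 3 < D'.card := by
    have hu : (P j' ∪ Q (n - j')).card + A'.card = (P j').card + (Q (n - j')).card :=
      Finset.card_union_add_card_inter _ _
    have hcompl : D'.card = n - (P j' ∪ Q (n - j')).card := by
      rw [hD', Finset.card_compl, Fintype.card_fin]
    have hp : (P j').card = j' := card_prefixSet hj'n Txp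
    have hq : (Q (n - j')).card = n - j' := card_prefixSet (Nat.sub_le n j') Typ
    have hle : (P j' ∪ Q (n - j')).card ≤ n := by
      simpa using Finset.card_le_univ (P j' ∪ Q (n - j'))
    omega
  -- basic disjointness
  have dBC : Disjoint B C := disjoint_sdiff_sdiff
  have dA'D' : Disjoint A' D' := by
    rw [hA', hD']
    exact disjoint_compl_right.mono_left
      ((Finset.inter_subset_left).trans Finset.subset_union_left)
  -- conditional disjointness
  have dA'C : j' ≤ j → Disjoint A' C := fun h => by
    rw [hA', hC]
    exact (Finset.disjoint_sdiff).mono_left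
      ((Finset.inter_subset_left).trans (prefixSet_mono h Txp))
  have dA'B : n - j' ≤ j → Disjoint A' B := fun h => by
    rw [hA', hB]
    exact (Finset.disjoint_sdiff).mono_left
      ((Finset.inter_subset_right).trans (prefixSet_mono h Typ))
  have dBD' : j ≤ j' → Disjoint B D' := fun h => by
    rw [hB, hD']
    exact disjoint_compl_right.mono_left
      ((Finset.sdiff_subset).trans ((prefixSet_mono h Txp).trans Finset.subset_union_left))
  have dCD' : j ≤ n - j' → Disjoint C D' := fun h => by
    rw [hC, hD']
    exact disjoint_compl_right.mono_left
      ((Finset.sdiff_subset).trans ((prefixSet_mono h Typ).trans Finset.subset_union_right))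
  -- case analysis
  rcases le_or_gt j' j with hc1 | hc1 <;> rcases le_or_gt (n - j') j with hc2 | hc2
  · exact three_disjoint_contra hn3 A' B C (dA'B hc2) (dA'C hc1) dBC hcardA' hcardB hcardC
  · exact three_disjoint_contra hn3 A' C D' (dA'C hc1) dA'D' (dCD' hc2.le)
      hcardA' hcardC hcardD'
  · exact three_disjoint_contra hn3 A' B D' (dA'B hc2) dA'D' (dBD' hc1.le)
      hcardA' hcardB hcardD'
  · exact three_disjoint_contra hn3 B C D' dBC (dBD' hc1.le) (dCD' hc2.le)
      hcardB hcardC hcardD'
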